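/- Any automorphism of the free group F₂ on generators a, b sends the commutator [a,b] = aba⁻¹b⁻¹ to a conjugate of [a,b] or of its inverse [a,b]⁻¹. -/

import Mathlib

namespace NielsenAux

open FreeGroup List

variable {α : Type*} [DecidableEq α]

/-- the reducedness predicate on words -/
def Rd (L : List (α × Bool)) : Prop :=
  List.IsChain (fun p q => ¬(p.1 = q.1 ∧ p.2 = !q.2)) L

theorem rd_toWord (g : FreeGroup α) : Rd g.toWord := by
  have h : ∀ L : List (α × Bool), Rd (reduce L) := by
    intro L
    induction L with
    | nil => simp [Rd]
    | cons p T ih =>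
      rw [FreeGroup.reduce.cons]
      rcases hT : reduce T with _ | ⟨q, tt⟩
      · simp [Rd]
      · rw [hT] at ih
        show Rd (if p.1 = q.1 ∧ p.2 = !q.2 then tt else p :: q :: tt)
        by_cases hc : p.1 = q.1 ∧ p.2 = !q.2
        · rw [if_pos hc]; exact ih.tail
        · rw [if_neg hc]; exact List.isChain_cons_cons.mpr ⟨hc, ih⟩
  have := h g.toWord
  rwa [FreeGroup.reduce_toWord] at this

theorem reduce_eq_self_of_rd {L : List (α × Bool)} (h : Rd L) : reduce L = L := by
  induction L with
  | nil => rfl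
  | cons p T ih =>
    have hT : reduce T = T := ih h.tail
    rw [FreeGroup.reduce.cons, hT]
    cases T with
    | nil => rfl
    | cons q tt =>
      have hpq : ¬(p.1 = q.1 ∧ p.2 = !q.2) := (List.isChain_cons_cons.mp h).1
      simp [hpq]

theorem toWord_mk_of_rd {L : List (α × Bool)} (h : Rd L) : (FreeGroup.mk L).toWord = L := by
  rw [FreeGroup.toWord_mk, reduce_eq_self_of_rd h]

theorem norm_mk_of_rd {L : List (α × Bool)} (h : Rd L) : (FreeGroup.mk L).norm = L.length := by
  rw [FreeGroup.norm, toWord_mk_of_rd h]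

theorem rd_invRev {L : List (α × Bool)} (h : Rd L) : Rd (invRev L) := by
  rw [Rd, FreeGroup.invRev, List.isChain_reverse]
  rw [List.isChain_map]
  refine h.imp ?_
  rintro ⟨x, b⟩ ⟨y, c⟩ hb hcontra
  simp only [flip] at hcontra
  apply hb
  obtain ⟨h1, h2⟩ := hcontra
  refine ⟨h1.symm, ?_⟩
  revert h2; cases b <;> cases c <;> simp

/-- longest common prefix length -/
def lcp : List (α × Bool) → List (α × Bool) → ℕ
  | [], _ => 0
  | _, [] => 0
  | (a :: as), (b :: bs) => if a = b then lcp as bs + 1 else 0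

@[simp] theorem lcp_nil_left (V : List (α × Bool)) : lcp [] V = 0 := by cases V <;> rfl
@[simp] theorem lcp_nil_right (U : List (α × Bool)) : lcp U [] = 0 := by cases U <;> rfl

theorem lcp_comm (U V : List (α × Bool)) : lcp U V = lcp V U := by
  induction U generalizing V with
  | nil => simp
  | cons a as ih =>
    cases V with
    | nil => simp
    | cons b bs =>
      by_cases h : a = b
      · subst h; simp [lcp, ih]
      · have h' : ¬ b = a := fun hh => h hh.symm
        simp only [lcp, if_neg h, if_neg h']

theorem lcp_le_left (U V : List (α × Bool)) : lcp U V ≤ U.length := by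
  induction U generalizing V with
  | nil => simp
  | cons a as ih =>
    cases V with
    | nil => simp
    | cons b bs =>
      by_cases h : a = b <;> simp only [lcp, if_pos, if_neg, h, List.length_cons]
      · exact Nat.succ_le_succ (ih bs)
      · simp

theorem lcp_le_right (U V : List (α × Bool)) : lcp U V ≤ V.length := by
  rw [lcp_comm]; exact lcp_le_left V U

theorem take_lcp_eq (U V : List (α × Bool)) : U.take (lcp U V) = V.take (lcp U V) := by
  induction U generalizing V with
  | nil => simp
  | cons a as ih =>
    cases V with
    | nil => simp
    | cons b bs =>
      by_cases h : a = b
      · subst h; simp [lcp, ih]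
      · simp [lcp, h]

/-- if A agrees with B longer than B agrees with C, then lcp A C = lcp B C -/
theorem lcp_trans_eq {A B C : List (α × Bool)} (h : lcp B C < lcp A B) :
    lcp A C = lcp B C := by
  induction A generalizing B C with
  | nil => simp at h
  | cons a as ih =>
    cases B with
    | nil => simp at h
    | cons b bs =>
      by_cases hab : a = b
      · subst hab
        cases C with
        | nil => simp
        | cons c cs =>
          by_cases hbc : a = c
          · subst hbc
            simp only [lcp, if_pos rfl, ite_true] at h ⊢
            have := ih (B := bs) (C := cs) (by omega)
            omega
          · simp [lcp, hbc]
      · simp [lcp, hab] at h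


-- appended to dev.lean inside namespace
section Part2
variable {α : Type*} [DecidableEq α]

def neg (p : α × Bool) : α × Bool := (p.1, !p.2)

theorem invRev_eq (L : List (α × Bool)) : FreeGroup.invRev L = (L.map neg).reverse := rfl

theorem key_words : ∀ (U V : List (α × Bool)), Rd U → Rd V →
    (FreeGroup.norm ((FreeGroup.mk U)⁻¹ * FreeGroup.mk V)) + 2 * lcp U V
      = U.length + V.length := by
  intro U
  induction U with
  | nil =>
    intro V _ hV
    rw [← FreeGroup.one_eq_mk]
    simp [norm_mk_of_rd hV]
  | cons u U' ih =>
    intro V hU hV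
    cases V with
    | nil =>
      have h1 : (FreeGroup.mk (u :: U'))⁻¹ * FreeGroup.mk [] = (FreeGroup.mk (u :: U'))⁻¹ := by
        rw [← FreeGroup.one_eq_mk, mul_one]
      rw [h1, FreeGroup.norm_inv_eq, norm_mk_of_rd hU]
      simp
    | cons v V' =>
      by_cases huv : u = v
      · subst huv
        have hsplit : ∀ (W : List (α × Bool)), FreeGroup.mk (u :: W) = FreeGroup.mk [u] * FreeGroup.mk W := by
          intro W; rw [FreeGroup.mul_mk]; rfl
        have hprod : (FreeGroup.mk (u :: U'))⁻¹ * FreeGroup.mk (u :: V')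
            = (FreeGroup.mk U')⁻¹ * FreeGroup.mk V' := by
          rw [hsplit U', hsplit V']; group
        have hlcp : lcp (u :: U') (u :: V') = lcp U' V' + 1 := by simp [lcp]
        rw [hprod, hlcp]
        have := ih V' hU.tail hV.tail
        simp only [List.length_cons]
        omega
      · have hprod : (FreeGroup.mk (u :: U'))⁻¹ * FreeGroup.mk (v :: V')
            = FreeGroup.mk (FreeGroup.invRev (u :: U') ++ (v :: V')) := by
          rw [FreeGroup.inv_mk, FreeGroup.mul_mk]
        have hrd : Rd (FreeGroup.invRev (u :: U') ++ (v :: V')) := by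
          apply List.IsChain.append (rd_invRev hU) hV
          intro x hx y hy
          rw [invRev_eq, List.getLast?_reverse] at hx
          simp only [List.head?_map, List.head?_cons, Option.map_some] at hx hy
          cases hx; cases hy
          rintro ⟨h1, h2⟩
          simp only [neg] at h1 h2
          apply huv
          ext
          · exact h1
          · simpa using h2
        have hlcp : lcp (u :: U') (v :: V') = 0 := by simp [lcp, huv]
        rw [hprod, hlcp, norm_mk_of_rd hrd]
        simp only [List.length_append, FreeGroup.invRev_length, List.length_cons]
        omega

/-- common prefix length of two group elements -/
def lam (g h : FreeGroup α) : ℕ := lcp g.toWord h.toWord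

theorem key (g h : FreeGroup α) :
    FreeGroup.norm (g⁻¹ * h) + 2 * lam g h = FreeGroup.norm g + FreeGroup.norm h := by
  have := key_words g.toWord h.toWord (rd_toWord g) (rd_toWord h)
  rwa [FreeGroup.mk_toWord, FreeGroup.mk_toWord] at this

theorem key_mul (g h : FreeGroup α) :
    FreeGroup.norm (g * h) + 2 * lam g⁻¹ h = FreeGroup.norm g + FreeGroup.norm h := by
  have := key g⁻¹ h
  rwa [inv_inv, FreeGroup.norm_inv_eq] at this

theorem lam_comm (g h : FreeGroup α) : lam g h = lam h g := lcp_comm _ _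

theorem lam_le_left (g h : FreeGroup α) : lam g h ≤ FreeGroup.norm g := lcp_le_left _ _
theorem lam_le_right (g h : FreeGroup α) : lam g h ≤ FreeGroup.norm h := lcp_le_right _ _

/-- lam with itself-inverse is less than half the length -/
theorem two_lam_inv_lt {x : FreeGroup α} (hx : x ≠ 1) :
    2 * lam x⁻¹ x < FreeGroup.norm x := by
  set U := x.toWord with hUdef
  have hrd : Rd U := rd_toWord x
  set n := U.length with hn
  have hn1 : 1 ≤ n := by
    rcases Nat.eq_zero_or_pos n with h | h
    · exact absurd (FreeGroup.norm_eq_zero.mp h) hx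
    · exact h
  set t := lam x⁻¹ x with ht
  have hnormx : FreeGroup.norm x = n := rfl
  have htle : t ≤ n := lcp_le_right _ _
  by_contra hcon
  push_neg at hcon
  -- hcon : norm x ≤ 2 * t, i.e. n ≤ 2t
  have hcon' : n ≤ 2 * t := hcon
  have hinv : x⁻¹.toWord = (U.map neg).reverse := by
    rw [FreeGroup.toWord_inv, invRev_eq]
  have hlen_inv : x⁻¹.toWord.length = n := by simp [hinv, hn]
  have hpt : ∀ i j, i < t → ∀ (hi : i < n) (hj : j < n), j = n - 1 - i →
      neg (U[j]'hj) = U[i]'hi := by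
    intro i j hit hi hj hij
    subst hij
    have h1 : (x⁻¹.toWord.take t)[i]'(by rw [List.length_take, hlen_inv]; omega)
        = (U.take t)[i]'(by rw [List.length_take]; omega) := by
      congr 1
      exact take_lcp_eq _ _
    rw [List.getElem_take, List.getElem_take] at h1
    rw [← h1]
    have h2 : x⁻¹.toWord[i]'(by omega) = ((List.map neg U).reverse)[i]'(by
        simp only [List.length_reverse, List.length_map]; omega) := by
      congr 1
    rw [h2, List.getElem_reverse, List.getElem_map]
    congr 1
    simp only [List.length_map, hn]
  have hchain := List.isChain_iff_getElem.mp hrd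
  rcases Nat.even_or_odd n with ⟨s, hs⟩ | ⟨s, hs⟩
  · -- n = s + s, use i = s-1, j = s
    have hs1 : 1 ≤ s := by omega
    have h := hpt (s-1) s (by omega) (by omega) (by omega) (by omega)
    have hch := hchain (s-1) (by simp only [← hn]; omega)
    have hidx : s - 1 + 1 = s := by omega
    apply hch
    simp only [List.get_eq_getElem, hidx]
    rw [← h]
    simp [neg]
  · -- n = 2s+1, use i = j = s
    have h := hpt s s (by omega) (by omega) (by omega) (by omega)
    have := congrArg Prod.snd h
    simp only [neg] at this
    exact absurd this (by simp)

end Part2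
section Part3
variable {α : Type*} [DecidableEq α]

local notation "‖" g "‖" => FreeGroup.norm g

theorem lam_trans_eq {A B C : FreeGroup α} (h : lam B C < lam A B) : lam A C = lam B C :=
  lcp_trans_eq h

/-- cancellation amount in the product u*v -/
def kap (u v : FreeGroup α) : ℕ := lam u⁻¹ v

theorem kap_spec (u v : FreeGroup α) : ‖u * v‖ + 2 * kap u v = ‖u‖ + ‖v‖ := key_mul u v

theorem kap_inv_inv (u v : FreeGroup α) : kap u v = kap v⁻¹ u⁻¹ := by
  have h1 := kap_spec u v
  have h2 := kap_spec v⁻¹ u⁻¹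
  have h3 : ‖v⁻¹ * u⁻¹‖ = ‖u * v‖ := by
    rw [← mul_inv_rev, FreeGroup.norm_inv_eq]
  rw [FreeGroup.norm_inv_eq, FreeGroup.norm_inv_eq, h3] at h2
  omega

theorem kap_self {v : FreeGroup α} (hv : v ≠ 1) : 2 * kap v v < ‖v‖ :=
  two_lam_inv_lt hv

/-- the cancellation of `w` against `g*v` equals that against `v`, provided
`v` is not more than consumed. -/
theorem kap_mul_right {g v w : FreeGroup α}
    (h : kap g v + kap v w < ‖v‖) : kap (g * v) w = kap v w := by
  have key1 : lam (g*v)⁻¹ v⁻¹ + kap g v = ‖v‖ := by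
    have h1 := key ((g*v)⁻¹) (v⁻¹)
    rw [inv_inv] at h1
    have h2 : (g * v) * v⁻¹ = g := by group
    rw [h2] at h1
    have h3 := kap_spec g v
    simp only [FreeGroup.norm_inv_eq] at h1
    omega
  have hlt : lam v⁻¹ w < lam (g*v)⁻¹ v⁻¹ := by
    have : kap v w = lam v⁻¹ w := rfl
    omega
  exact lam_trans_eq hlt

/-- Main chain theorem: products along chains over a Nielsen-reduced set `S`
have norm at least the chain length. -/
theorem chain_theorem (S : Set (FreeGroup α))
    (hS1 : ∀ u ∈ S, u ≠ (1 : FreeGroup α))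
    (hN1 : ∀ u ∈ S, ∀ v ∈ S, v ≠ u⁻¹ → 2 * kap u v ≤ ‖u‖ ∧ 2 * kap u v ≤ ‖v‖)
    (hN2 : ∀ u ∈ S, ∀ v ∈ S, ∀ w ∈ S, v ≠ u⁻¹ → w ≠ v⁻¹ →
      kap u v + kap v w < ‖v‖) :
    ∀ L : List (FreeGroup α), (∀ u ∈ L, u ∈ S) → List.IsChain (fun u v => v ≠ u⁻¹) L →
      ∀ hne : L ≠ [],
      (‖L.prod‖ ≥ L.length ∧
        ∀ w ∈ S, w ≠ (L.getLast hne)⁻¹ →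
          kap L.prod w = kap (L.getLast hne) w ∧
          ‖L.prod‖ ≥ L.length + kap (L.getLast hne) w) := by
  intro L
  induction L using List.reverseRecOn with
  | nil => intro _ _ hne; exact absurd rfl hne
  | append_singleton L w0 ih =>
    intro hmem hchain hne
    rcases eq_or_ne L [] with hL | hL
    · subst hL
      simp only [List.nil_append] at *
      have hw0 : w0 ∈ S := hmem w0 (by simp)
      have h1 : (1:ℕ) ≤ ‖w0‖ := by
        have := hS1 w0 hw0
        have h0 : ‖w0‖ ≠ 0 := fun hc => this (FreeGroup.norm_eq_zero.mp hc)
        omega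
      refine ⟨by simpa using h1, ?_⟩
      intro w hw hwne
      simp only [List.getLast_singleton, List.prod_cons, List.prod_nil, mul_one,
        List.length_cons, List.length_nil]
      obtain ⟨hn1a, hn1b⟩ := hN1 w0 hw0 w hw (by simpa using hwne)
      exact ⟨by trivial, by omega⟩
    · -- L nonempty
      have hmemL : ∀ u ∈ L, u ∈ S := fun u hu => hmem u (by simp [hu])
      have hchainL : List.IsChain (fun u v => v ≠ u⁻¹) L := (List.isChain_append.mp hchain).1
      obtain ⟨hlen, hinv⟩ := ih hmemL hchainL hL
      set u := L.getLast hL with hu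
      have hw0 : w0 ∈ S := hmem w0 (by simp)
      have hu_mem : u ∈ S := hmemL u (List.getLast_mem hL)
      have hjunction : w0 ≠ u⁻¹ := by
        have := (List.isChain_append.mp hchain).2.2
        apply this u _ w0 (by simp)
        rw [List.getLast?_eq_getLast hL]
        simp [hu]
      obtain ⟨hkap_eq, hkap_norm⟩ := hinv w0 hw0 hjunction
      have hprod : (L ++ [w0]).prod = L.prod * w0 := by simp
      have hlast : (L ++ [w0]).getLast hne = w0 := by
        simp [List.getLast_append]
      have hnorm_prod : ‖L.prod * w0‖ + 2 * kap L.prod w0 = ‖L.prod‖ + ‖w0‖ :=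
        kap_spec _ _
      have hN1u := hN1 u hu_mem w0 hw0 hjunction
      have hw0ne1 : ‖w0‖ ≥ 1 := by
        have := hS1 w0 hw0
        have h0 : ‖w0‖ ≠ 0 := fun hc => this (FreeGroup.norm_eq_zero.mp hc)
        omega
      have hfirst : ‖(L ++ [w0]).prod‖ ≥ (L ++ [w0]).length := by
        rw [hprod]
        have : 2 * kap u w0 ≤ ‖w0‖ := hN1u.2
        simp only [List.length_append, List.length_cons, List.length_nil]
        omega
      refine ⟨hfirst, ?_⟩
      intro w hw hwne
      rw [hlast] at hwne ⊢
      have hN2' : kap u w0 + kap w0 w < ‖w0‖ := hN2 u hu_mem w0 hw0 w hw hjunction hwne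
      have heq : kap ((L ++ [w0]).prod) w = kap w0 w := by
        rw [hprod]
        have h' : kap L.prod w0 + kap w0 w < ‖w0‖ := by rw [hkap_eq]; exact hN2'
        exact kap_mul_right h'
      refine ⟨heq, ?_⟩
      rw [hprod]
      simp only [List.length_append, List.length_cons, List.length_nil]
      omega

end Part3
section Part4
variable {α : Type*} [DecidableEq α]

local notation "‖" g "‖" => FreeGroup.norm g

def SS (x y : FreeGroup α) : Set (FreeGroup α) := {x, x⁻¹, y, y⁻¹}

theorem SS_inv {x y u : FreeGroup α} (hu : u ∈ SS x y) : u⁻¹ ∈ SS x y := by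
  rcases hu with h | h | h | h <;> subst h <;> simp [SS]

def HasChain (x y g : FreeGroup α) : Prop :=
  ∃ L : List (FreeGroup α), (∀ u ∈ L, u ∈ SS x y) ∧
    List.IsChain (fun u v => v ≠ u⁻¹) L ∧ L.prod = g

theorem HasChain.one (x y : FreeGroup α) : HasChain x y 1 := ⟨[], by simp⟩

theorem HasChain.smul {x y s g : FreeGroup α} (hs : s ∈ SS x y) (hg : HasChain x y g) :
    HasChain x y (s * g) := by
  obtain ⟨L, hmem, hchain, hprod⟩ := hg
  cases L with
  | nil => exact ⟨[s], by simpa using hs, by simp, by simp [← hprod]⟩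
  | cons u T =>
    by_cases hc : u = s⁻¹
    · refine ⟨T, fun v hv => hmem v (by simp [hv]), hchain.tail, ?_⟩
      rw [← hprod, List.prod_cons, hc]
      group
    · refine ⟨s :: u :: T, ?_, ?_, ?_⟩
      · intro v hv
        rcases List.mem_cons.mp hv with h | h
        · subst h; exact hs
        · exact hmem v h
      · exact List.isChain_cons_cons.mpr ⟨hc, hchain⟩
      · rw [List.prod_cons, hprod]

theorem HasChain.mul {x y g h : FreeGroup α} (hg : HasChain x y g) (hh : HasChain x y h) :
    HasChain x y (g * h) := by
  obtain ⟨L, hmem, hchain, hprod⟩ := hg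
  subst hprod
  induction L with
  | nil => simpa using hh
  | cons u T ih =>
    rw [List.prod_cons, mul_assoc]
    exact HasChain.smul (hmem u (by simp))
      (ih (fun v hv => hmem v (by simp [hv])) hchain.tail)

theorem HasChain.inv {x y g : FreeGroup α} (hg : HasChain x y g) : HasChain x y g⁻¹ := by
  obtain ⟨L, hmem, hchain, hprod⟩ := hg
  refine ⟨(L.map (·⁻¹)).reverse, ?_, ?_, ?_⟩
  · intro v hv
    simp only [List.mem_reverse, List.mem_map] at hv
    obtain ⟨u, hu, rfl⟩ := hv
    exact SS_inv (hmem u hu)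
  · rw [List.isChain_reverse, List.isChain_map]
    refine hchain.imp ?_
    intro a b hab
    intro hcon
    exact hab (by simpa using hcon.symm)
  · rw [← List.prod_inv_reverse, hprod]

theorem hasChain_of_mem_closure {x y g : FreeGroup α}
    (hg : g ∈ Subgroup.closure ({x, y} : Set (FreeGroup α))) : HasChain x y g := by
  induction hg using Subgroup.closure_induction with
  | mem u hu =>
    have hu' : u ∈ SS x y := by
      rcases hu with h | h
      · simp [SS, h]
      · rw [Set.mem_singleton_iff] at h
        simp [SS, h]
    exact ⟨[u], by simpa using hu', by simp, by simp⟩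
  | one => exact HasChain.one x y
  | mul a b _ _ ha hb => exact ha.mul hb
  | inv a _ ha => exact ha.inv

/-- under N1/N2, elements of norm 1 in the subgroup are letters of the basis -/
theorem letter_mem_SS {x y : FreeGroup α}
    (hgen : Subgroup.closure ({x, y} : Set (FreeGroup α)) = ⊤)
    (hS1 : ∀ u ∈ SS x y, u ≠ (1 : FreeGroup α))
    (hN1 : ∀ u ∈ SS x y, ∀ v ∈ SS x y, v ≠ u⁻¹ → 2 * kap u v ≤ ‖u‖ ∧ 2 * kap u v ≤ ‖v‖)
    (hN2 : ∀ u ∈ SS x y, ∀ v ∈ SS x y, ∀ w ∈ SS x y, v ≠ u⁻¹ → w ≠ v⁻¹ →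
      kap u v + kap v w < ‖v‖)
    {g : FreeGroup α} (hg1 : ‖g‖ = 1) : g ∈ SS x y := by
  have hg : HasChain x y g := hasChain_of_mem_closure (by rw [hgen]; trivial)
  obtain ⟨L, hmem, hchain, hprod⟩ := hg
  rcases eq_or_ne L [] with hL | hL
  · subst hL
    simp at hprod
    rw [← hprod] at hg1
    simp at hg1
  · have := (chain_theorem (SS x y) hS1 hN1 hN2 L hmem hchain hL).1
    rw [hprod, hg1] at this
    have hlen : L.length = 1 := by
      have : L.length ≥ 1 := by
        cases L with
        | nil => exact absurd rfl hL
        | cons _ _ => simp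
      omega
    obtain ⟨u, hu⟩ := List.length_eq_one_iff.mp hlen
    subst hu
    simp only [List.prod_cons, List.prod_nil, mul_one] at hprod
    rw [← hprod]
    exact hmem u (by simp)

end Part4
section Moves
variable {α : Type*} [DecidableEq α]

local notation "‖" g "‖" => FreeGroup.norm g

inductive Mv : (FreeGroup α × FreeGroup α) → (FreeGroup α × FreeGroup α) → Prop
  | swap (x y) : Mv (x, y) (y, x)
  | invl (x y) : Mv (x, y) (x⁻¹, y)
  | mulr (x y) : Mv (x, y) (x * y, y)
  | mull (x y) : Mv (x, y) (x, x * y)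
  | conj (x y g) : Mv (x, y) (g * x * g⁻¹, g * y * g⁻¹)

def Reach : (FreeGroup α × FreeGroup α) → (FreeGroup α × FreeGroup α) → Prop :=
  Relation.ReflTransGen Mv

def Gen (p : FreeGroup α × FreeGroup α) : Prop :=
  Subgroup.closure ({p.1, p.2} : Set (FreeGroup α)) = ⊤

def Kom (p : FreeGroup α × FreeGroup α) : FreeGroup α := p.1 * p.2 * p.1⁻¹ * p.2⁻¹

def Ecl (g h : FreeGroup α) : Prop := IsConj g h ∨ IsConj g⁻¹ h

theorem isConj_inv {G : Type*} [Group G] {g h : G} (h1 : IsConj g h) : IsConj g⁻¹ h⁻¹ := by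
  obtain ⟨c, hc⟩ := isConj_iff.mp h1
  exact isConj_iff.mpr ⟨c, by rw [← hc]; group⟩

theorem Ecl.refl (g : FreeGroup α) : Ecl g g := Or.inl (IsConj.refl g)

theorem Ecl.symm {g h : FreeGroup α} (h1 : Ecl g h) : Ecl h g := by
  rcases h1 with h1 | h1
  · exact Or.inl h1.symm
  · right
    have := isConj_inv h1.symm
    simpa using this

theorem Ecl.trans {g h k : FreeGroup α} (h1 : Ecl g h) (h2 : Ecl h k) : Ecl g k := by
  rcases h1 with h1 | h1 <;> rcases h2 with h2 | h2
  · exact Or.inl (h1.trans h2)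
  · exact Or.inr ((isConj_inv h1).trans h2)
  · exact Or.inr (h1.trans h2)
  · left
    have h1' : IsConj g h⁻¹ := by simpa using isConj_inv h1
    exact h1'.trans h2

theorem Ecl.inv_right {g h : FreeGroup α} (h1 : Ecl g h) : Ecl g h⁻¹ := by
  rcases h1 with h1 | h1
  · exact Or.inr (isConj_inv h1)
  · left
    simpa using isConj_inv h1

theorem mv_gen {p q : FreeGroup α × FreeGroup α} (h : Mv p q) (hg : Gen p) : Gen q := by
  cases h with
  | swap x y => unfold Gen at *; rwa [Set.pair_comm]
  | invl x y =>
    unfold Gen at *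
    rw [← hg]
    apply _root_.le_antisymm <;> rw [Subgroup.closure_le]
    · rintro z (rfl | h)
      · exact inv_mem (Subgroup.subset_closure (by simp))
      · simp only [Set.mem_singleton_iff] at h
        subst h
        exact Subgroup.subset_closure (by simp)
    · rintro z (rfl | h)
      · have : z⁻¹ ∈ Subgroup.closure ({z⁻¹, y} : Set (FreeGroup α)) :=
          Subgroup.subset_closure (by simp)
        simpa using inv_mem this
      · simp only [Set.mem_singleton_iff] at h
        subst h
        exact Subgroup.subset_closure (by simp)
  | mulr x y =>
    unfold Gen at *
    rw [← hg]
    apply _root_.le_antisymm <;> rw [Subgroup.closure_le]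
    · rintro z (rfl | h)
      · exact mul_mem (Subgroup.subset_closure (by simp)) (Subgroup.subset_closure (by simp))
      · simp only [Set.mem_singleton_iff] at h
        subst h
        exact Subgroup.subset_closure (by simp)
    · rintro z (rfl | h)
      · have h1 : z * y ∈ Subgroup.closure ({z * y, y} : Set (FreeGroup α)) :=
          Subgroup.subset_closure (by simp)
        have h2 : y ∈ Subgroup.closure ({z * y, y} : Set (FreeGroup α)) :=
          Subgroup.subset_closure (by simp)
        have := mul_mem h1 (inv_mem h2)
        simpa using this
      · simp only [Set.mem_singleton_iff] at h
        subst h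
        exact Subgroup.subset_closure (by simp)
  | mull x y =>
    unfold Gen at *
    rw [← hg]
    apply _root_.le_antisymm <;> rw [Subgroup.closure_le]
    · rintro z (rfl | h)
      · exact Subgroup.subset_closure (by simp)
      · simp only [Set.mem_singleton_iff] at h
        subst h
        exact mul_mem (Subgroup.subset_closure (by simp)) (Subgroup.subset_closure (by simp))
    · rintro z (rfl | h)
      · exact Subgroup.subset_closure (by simp)
      · simp only [Set.mem_singleton_iff] at h
        subst h
        have h1 : x ∈ Subgroup.closure ({x, x * z} : Set (FreeGroup α)) :=
          Subgroup.subset_closure (by simp)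
        have h2 : x * z ∈ Subgroup.closure ({x, x * z} : Set (FreeGroup α)) :=
          Subgroup.subset_closure (by simp)
        have := mul_mem (inv_mem h1) h2
        simpa using this
  | conj x y g =>
    unfold Gen at *
    have himg : ({g * x * g⁻¹, g * y * g⁻¹} : Set (FreeGroup α))
        = (⇑(MulAut.conj g).toMonoidHom) '' {x, y} := by
      rw [Set.image_pair]
      simp [MulAut.conj]
    rw [himg, ← MonoidHom.map_closure, hg]
    exact Subgroup.map_top_of_surjective _ (MulEquiv.surjective _)

theorem mv_kom {p q : FreeGroup α × FreeGroup α} (h : Mv p q) : Ecl (Kom p) (Kom q) := by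
  cases h with
  | swap x y =>
    right
    have : (Kom (x, y))⁻¹ = Kom (y, x) := by unfold Kom; group
    rw [this]
  | invl x y =>
    right
    refine isConj_iff.mpr ⟨x⁻¹, ?_⟩
    unfold Kom; group
  | mulr x y =>
    left
    have : Kom (x, y) = Kom (x * y, y) := by unfold Kom; group
    rw [this]
  | mull x y =>
    left
    refine isConj_iff.mpr ⟨x, ?_⟩
    unfold Kom; group
  | conj x y g =>
    left
    refine isConj_iff.mpr ⟨g, ?_⟩
    unfold Kom; group

theorem reach_gen {p q : FreeGroup α × FreeGroup α} (h : Reach p q) (hg : Gen p) : Gen q := by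
  induction h with
  | refl => exact hg
  | tail _ hmv ih => exact mv_gen hmv ih

theorem reach_kom {p q : FreeGroup α × FreeGroup α} (h : Reach p q) : Ecl (Kom p) (Kom q) := by
  induction h with
  | refl => exact Ecl.refl _
  | tail _ hmv ih => exact ih.trans (mv_kom hmv)

open Relation.ReflTransGen in
theorem reach_uv (x y u v : FreeGroup α) (hu : u = x ∨ u = x⁻¹) (hv : v = y ∨ v = y⁻¹) :
    Reach (x, y) (u, v) := by
  have hswap : ∀ a b : FreeGroup α, Reach (a, b) (b, a) := fun a b => single (Mv.swap a b)
  have hinvr : ∀ a b : FreeGroup α, Reach (a, b) (a, b⁻¹) := fun a b =>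
    ((hswap a b).tail (Mv.invl b a)).trans (hswap b⁻¹ a)
  have h1 : Reach (x, y) (u, y) := by
    rcases hu with rfl | rfl
    · exact Relation.ReflTransGen.refl
    · exact single (Mv.invl x y)
  rcases hv with rfl | rfl
  · exact h1
  · exact h1.trans (hinvr u y)

theorem reach_invr (x y : FreeGroup α) : Reach (x, y) (x, y⁻¹) :=
  reach_uv x y x y⁻¹ (Or.inl rfl) (Or.inr rfl)

end Moves
section NonDeg

local notation "‖" g "‖" => FreeGroup.norm g

abbrev F2 := FreeGroup (Fin 2)

theorem ab_ne_ba : (FreeGroup.of 0 : F2) * FreeGroup.of 1 ≠ FreeGroup.of 1 * FreeGroup.of 0 := by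
  intro h
  have h1 : (FreeGroup.of 0 : F2) * FreeGroup.of 1 = FreeGroup.mk [((0:Fin 2), true), ((1:Fin 2), true)] := by
    rw [show (FreeGroup.of (0:Fin 2)) = FreeGroup.mk [((0:Fin 2), true)] from rfl,
      show (FreeGroup.of (1:Fin 2)) = FreeGroup.mk [((1:Fin 2), true)] from rfl, FreeGroup.mul_mk]
    rfl
  have h2 : (FreeGroup.of 1 : F2) * FreeGroup.of 0 = FreeGroup.mk [((1:Fin 2), true), ((0:Fin 2), true)] := by
    rw [show (FreeGroup.of (1:Fin 2)) = FreeGroup.mk [((1:Fin 2), true)] from rfl,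
      show (FreeGroup.of (0:Fin 2)) = FreeGroup.mk [((0:Fin 2), true)] from rfl, FreeGroup.mul_mk]
    rfl
  rw [h1, h2] at h
  have h3 := congrArg FreeGroup.toWord h
  rw [toWord_mk_of_rd (by simp [Rd]), toWord_mk_of_rd (by simp [Rd])] at h3
  simp at h3

theorem not_in_zpowers (z : F2) : Subgroup.zpowers z ≠ ⊤ := by
  intro h
  have ha : (FreeGroup.of 0 : F2) ∈ Subgroup.zpowers z := by rw [h]; trivial
  have hb : (FreeGroup.of 1 : F2) ∈ Subgroup.zpowers z := by rw [h]; trivial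
  obtain ⟨i, hi⟩ := ha
  obtain ⟨j, hj⟩ := hb
  apply ab_ne_ba
  rw [← hi, ← hj, zpow_mul_comm]

theorem nondeg {x y : F2} (hgen : Gen (x, y)) :
    x ≠ 1 ∧ y ≠ 1 ∧ y ≠ x ∧ y ≠ x⁻¹ := by
  have key : ∀ z : F2, ¬ (({x, y} : Set F2) ⊆ (Subgroup.zpowers z : Subgroup F2)) := by
    intro z hsub
    apply not_in_zpowers z
    have : Subgroup.closure ({x, y} : Set F2) ≤ Subgroup.zpowers z :=
      (Subgroup.closure_le _).mpr hsub
    rw [hgen] at this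
    exact _root_.le_antisymm le_top this
  have mem2 : ∀ (w z : F2), w ∈ ({z, w} : Set F2) := by intro w z; simp
  refine ⟨?_, ?_, ?_, ?_⟩
  · rintro rfl
    apply key y
    intro z hz
    simp only [Set.mem_insert_iff, Set.mem_singleton_iff] at hz
    rcases hz with rfl | rfl
    · exact one_mem _
    · exact Subgroup.mem_zpowers _
  · rintro rfl
    apply key x
    intro z hz
    simp only [Set.mem_insert_iff, Set.mem_singleton_iff] at hz
    rcases hz with rfl | rfl
    · exact Subgroup.mem_zpowers _
    · exact one_mem _
  · rintro rfl
    apply key y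
    intro z hz
    simp only [Set.mem_insert_iff, Set.mem_singleton_iff] at hz
    rcases hz with rfl | rfl
    · exact Subgroup.mem_zpowers _
    · exact Subgroup.mem_zpowers _
  · rintro rfl
    apply key x
    intro z hz
    simp only [Set.mem_insert_iff, Set.mem_singleton_iff] at hz
    rcases hz with rfl | rfl
    · exact Subgroup.mem_zpowers _
    · exact inv_mem (Subgroup.mem_zpowers _)

/-- N1 at a minimal pair -/
theorem N1_min {x y : F2}
    (hmin : ∀ p, Reach (x, y) p → ‖x‖ + ‖y‖ ≤ ‖p.1‖ + ‖p.2‖)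
    {u v : F2} (hu : u = x ∨ u = x⁻¹) (hv : v = y ∨ v = y⁻¹) :
    ‖x‖ ≤ ‖u * v‖ ∧ ‖y‖ ≤ ‖u * v‖ := by
  have hru : Reach (x, y) (u, v) := reach_uv x y u v hu hv
  have h1 := hmin (u * v, v) (hru.tail (Mv.mulr u v))
  have h2 := hmin (u, u * v) (hru.tail (Mv.mull u v))
  have hnu : ‖u‖ = ‖x‖ := by rcases hu with rfl | rfl <;> simp
  have hnv : ‖v‖ = ‖y‖ := by rcases hv with rfl | rfl <;> simp
  simp only at h1 h2
  omega

theorem norm_xtype {x u : F2} (hu : u = x ∨ u = x⁻¹) : ‖u‖ = ‖x‖ := by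
  rcases hu with rfl | rfl <;> simp

/-- full N1 for the generator set at a minimal pair -/
theorem N1_SS {x y : F2} (hx : x ≠ 1) (hy : y ≠ 1)
    (hmin : ∀ p, Reach (x, y) p → ‖x‖ + ‖y‖ ≤ ‖p.1‖ + ‖p.2‖) :
    ∀ u ∈ SS x y, ∀ v ∈ SS x y, v ≠ u⁻¹ → 2 * kap u v ≤ ‖u‖ ∧ 2 * kap u v ≤ ‖v‖ := by
  have mixed : ∀ u v : F2, (u = x ∨ u = x⁻¹) → (v = y ∨ v = y⁻¹) →
      2 * kap u v ≤ ‖u‖ ∧ 2 * kap u v ≤ ‖v‖ := by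
    intro u v hu hv
    have hs := kap_spec u v
    have hn := N1_min hmin hu hv
    have h1 : ‖u‖ = ‖x‖ := norm_xtype hu
    have h2 : ‖v‖ = ‖y‖ := norm_xtype hv
    omega
  have mixed' : ∀ u v : F2, (u = y ∨ u = y⁻¹) → (v = x ∨ v = x⁻¹) →
      2 * kap u v ≤ ‖u‖ ∧ 2 * kap u v ≤ ‖v‖ := by
    intro u v hu hv
    rw [kap_inv_inv u v]
    have h := mixed v⁻¹ u⁻¹ (by rcases hv with rfl | rfl <;> simp) (by rcases hu with rfl | rfl <;> simp)
    rw [FreeGroup.norm_inv_eq, FreeGroup.norm_inv_eq] at h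
    exact ⟨h.2, h.1⟩
  have selfcase : ∀ v : F2, v ≠ 1 → 2 * kap v v ≤ ‖v‖ ∧ 2 * kap v v ≤ ‖v‖ := by
    intro v hv
    have := kap_self hv
    omega
  intro u hu v hv hne
  have hu' : u = x ∨ u = x⁻¹ ∨ u = y ∨ u = y⁻¹ := by simpa [SS] using hu
  have hv' : v = x ∨ v = x⁻¹ ∨ v = y ∨ v = y⁻¹ := by simpa [SS] using hv
  have hx' : x⁻¹ ≠ (1:F2) := fun h => hx (by simpa using congrArg (·⁻¹) h)
  have hy' : y⁻¹ ≠ (1:F2) := fun h => hy (by simpa using congrArg (·⁻¹) h)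
  rcases hu' with rfl | rfl | rfl | rfl <;> rcases hv' with rfl | rfl | rfl | rfl
  · exact selfcase _ hx
  · exact absurd rfl hne
  · exact mixed _ _ (Or.inl rfl) (Or.inl rfl)
  · exact mixed _ _ (Or.inl rfl) (Or.inr rfl)
  · exact absurd (inv_inv _).symm hne
  · exact selfcase _ hx'
  · exact mixed _ _ (Or.inr rfl) (Or.inl rfl)
  · exact mixed _ _ (Or.inr rfl) (Or.inr rfl)
  · exact mixed' _ _ (Or.inl rfl) (Or.inl rfl)
  · exact mixed' _ _ (Or.inl rfl) (Or.inr rfl)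
  · exact selfcase _ hy
  · exact absurd rfl hne
  · exact mixed' _ _ (Or.inr rfl) (Or.inl rfl)
  · exact mixed' _ _ (Or.inr rfl) (Or.inr rfl)
  · exact absurd (inv_inv _).symm hne
  · exact selfcase _ hy'

end NonDeg
section Part7
variable {α : Type*} [DecidableEq α]

local notation "‖" g "‖" => FreeGroup.norm g

theorem take_invRev (M : List (α × Bool)) (k : ℕ) :
    (FreeGroup.invRev M).take k = FreeGroup.invRev (M.drop (M.length - k)) := by
  rw [invRev_eq, invRev_eq, List.take_reverse, List.length_map, ← List.map_drop]

/-- split a group element at position k -/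
theorem split_lemma (g : FreeGroup α) (k : ℕ) (hk : k ≤ ‖g‖) :
    ∃ p q : FreeGroup α, g = p * q ∧ p.toWord = g.toWord.take k ∧
      q.toWord = g.toWord.drop k ∧ ‖p‖ = k ∧ ‖q‖ = ‖g‖ - k := by
  refine ⟨FreeGroup.mk (g.toWord.take k), FreeGroup.mk (g.toWord.drop k), ?_, ?_, ?_, ?_, ?_⟩
  · rw [FreeGroup.mul_mk, List.take_append_drop, FreeGroup.mk_toWord]
  · exact toWord_mk_of_rd ((rd_toWord g).take k)
  · exact toWord_mk_of_rd ((rd_toWord g).drop k)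
  · rw [norm_mk_of_rd ((rd_toWord g).take k), List.length_take]
    exact min_eq_left hk
  · rw [norm_mk_of_rd ((rd_toWord g).drop k), List.length_drop]
    rfl

/-- The hard configuration x = p·q, y = p·t·q contradicts minimality. -/
theorem hard_combo {x y : F2} (hx1 : x ≠ 1) (hyx : y ≠ x)
    (hmin : ∀ r, Reach (x, y) r → ‖x‖ + ‖y‖ ≤ ‖r.1‖ + ‖r.2‖)
    {p q : F2} {n2 m : ℕ}
    (hx_eq : x = p * q) (hWx : x.toWord = p.toWord ++ q.toWord)
    (hp : ‖p‖ = n2) (hq : ‖q‖ = n2) (hny : ‖y‖ = m) (hmn : 2 * n2 ≤ m)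
    (hpre : y.toWord.take n2 = p.toWord)
    (hsuf : y.toWord.drop (m - n2) = q.toWord) : False := by
  have hnx : ‖x‖ = 2 * n2 := by
    rw [FreeGroup.norm, hWx, List.length_append, ← FreeGroup.norm, ← FreeGroup.norm, hp, hq]
    omega
  rcases eq_or_lt_of_le hmn with heq | hlt
  · -- m = 2*n2 : then y = x
    apply hyx
    apply FreeGroup.toWord_injective
    rw [hWx, ← hpre, ← hsuf]
    have h1 : m - n2 = n2 := by omega
    rw [h1, List.take_append_drop]
  · -- m > 2*n2
    set mid := (y.toWord.drop n2).take (m - 2*n2) with hmid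
    set t := FreeGroup.mk mid with ht
    have hylen : y.toWord.length = m := hny
    have hWy : y.toWord = p.toWord ++ (mid ++ q.toWord) := by
      conv_lhs => rw [← List.take_append_drop n2 y.toWord]
      rw [hpre]
      congr 1
      conv_lhs => rw [← List.take_append_drop (m - 2*n2) (y.toWord.drop n2)]
      congr 1
      rw [List.drop_drop, ← hsuf]
      congr 1
      omega
    have hy_eq : y = p * (t * q) := by
      conv_lhs => rw [← FreeGroup.mk_toWord (x := y), hWy]
      rw [← FreeGroup.mul_mk, ← FreeGroup.mul_mk, FreeGroup.mk_toWord, FreeGroup.mk_toWord, ht]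
    have hrd_mid : Rd mid := ((rd_toWord y).drop n2).take _
    have htnorm : ‖t‖ = m - 2*n2 := by
      rw [ht, norm_mk_of_rd hrd_mid, hmid, List.length_take, List.length_drop, hylen]
      omega
    have hreach : Reach (x, y) (q * x⁻¹⁻¹ * q⁻¹, q * (x⁻¹ * y) * q⁻¹) := by
      have s1 : Reach (x, y) (x⁻¹, y) := Relation.ReflTransGen.single (Mv.invl x y)
      have s2 := s1.tail (Mv.mull x⁻¹ y)
      have s3 := s2.tail (Mv.invl x⁻¹ (x⁻¹ * y))
      exact s3.tail (Mv.conj _ _ q)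
    have e1 : q * x⁻¹⁻¹ * q⁻¹ = q * p := by rw [inv_inv, hx_eq]; group
    have e2 : q * (x⁻¹ * y) * q⁻¹ = t := by rw [hx_eq, hy_eq]; group
    rw [e1, e2] at hreach
    have hm := hmin _ hreach
    simp only at hm
    have hqp : ‖q * p‖ ≤ 2 * n2 := by
      have := FreeGroup.norm_mul_le q p
      omega
    rw [hnx, hny] at hm
    have hx0 : x ≠ 1 → ¬ (‖x‖ = 0) := fun h hc => h (FreeGroup.norm_eq_zero.mp hc)
    have := hx0 hx1
    rw [hnx] at this
    omega

theorem N2_core {x y u w : F2} (hx1 : x ≠ 1) (hyx : y ≠ x) (hyxi : y ≠ x⁻¹)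
    (hmin : ∀ r, Reach (x, y) r → ‖x‖ + ‖y‖ ≤ ‖r.1‖ + ‖r.2‖)
    (hu2 : u = y ∨ u = y⁻¹) (hw2 : w = y ∨ w = y⁻¹)
    (hcon : ‖x‖ ≤ kap u x + kap x w)
    (k1 : 2 * kap u x ≤ ‖x‖) (k1' : 2 * kap u x ≤ ‖u‖)
    (k2 : 2 * kap x w ≤ ‖x‖) : False := by
  set n2 := kap u x with hn2
  have hkxw : kap x w = n2 := by omega
  have hnx : ‖x‖ = 2 * n2 := by omega
  set m := ‖y‖ with hm
  have hum : ‖u‖ = m := by rcases hu2 with rfl | rfl <;> simp [hm]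
  have hmn : 2 * n2 ≤ m := by omega
  obtain ⟨p, q, hx_eq, hWp, hWq, hpn, hqn⟩ := split_lemma x n2 (by omega)
  have hq2 : ‖q‖ = n2 := by omega
  have hWx : x.toWord = p.toWord ++ q.toWord := by
    rw [hWp, hWq, List.take_append_drop]
  -- prefix fact from u
  have F1 : (u⁻¹.toWord).take n2 = p.toWord := by
    have e := take_lcp_eq u⁻¹.toWord x.toWord
    have hk : lcp u⁻¹.toWord x.toWord = n2 := rfl
    rw [hk] at e
    rw [e, ← hWp]
  -- prefix fact from w
  have G2 : (w.toWord).take n2 = q⁻¹.toWord := by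
    have e := take_lcp_eq x⁻¹.toWord w.toWord
    have hk : lcp x⁻¹.toWord w.toWord = kap x w := rfl
    rw [hkxw] at hk
    rw [hk] at e
    have hlen : (x.toWord).length = ‖x‖ := rfl
    have hidx : (x.toWord).length - n2 = n2 := by omega
    rw [← e, FreeGroup.toWord_inv, take_invRev, hidx, FreeGroup.toWord_inv, hWq]
  -- helper: length of y's word
  have hylen : y.toWord.length = m := rfl
  have hyilen : y⁻¹.toWord.length = m := by
    rw [FreeGroup.toWord_inv, FreeGroup.invRev_length, hylen]
  -- suffix derivation helper
  have suffix_of_take : ∀ z v : F2, z.toWord.length = m → (z⁻¹.toWord).take n2 = v.toWord →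
      z.toWord.drop (m - n2) = v⁻¹.toWord := by
    intro z v hz hpref
    rw [FreeGroup.toWord_inv, take_invRev, hz] at hpref
    rw [FreeGroup.toWord_inv, ← hpref, FreeGroup.invRev_invRev]
  rcases hu2 with h1 | h1 <;> rcases hw2 with h2 | h2
  · -- u = y, w = y : pass to the pair (x, y⁻¹)
    rw [h1] at F1
    rw [h2] at G2
    have hsuf : y⁻¹.toWord.drop (m - n2) = q.toWord := by
      have := suffix_of_take y⁻¹ q⁻¹ hyilen (by rw [inv_inv]; exact G2)
      rwa [inv_inv] at this
    have hmin' : ∀ r, Reach (x, y⁻¹) r → ‖x‖ + ‖y⁻¹‖ ≤ ‖r.1‖ + ‖r.2‖ := by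
      intro r hr
      have := hmin r ((reach_invr x y).trans hr)
      rwa [FreeGroup.norm_inv_eq]
    exact hard_combo hx1 (fun h => hyxi (by rw [← h]; simp)) hmin' hx_eq hWx hpn hq2
      (by rw [FreeGroup.norm_inv_eq]) hmn F1 hsuf
  · -- u = y, w = y⁻¹ : two prefixes of y⁻¹.toWord
    rw [h1] at F1
    rw [h2] at G2
    have : p = q⁻¹ := FreeGroup.toWord_injective (by rw [← F1, ← G2])
    rw [this] at hx_eq
    simp at hx_eq
    exact hx1 hx_eq
  · -- u = y⁻¹, w = y : two prefixes of y.toWord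
    rw [h1, inv_inv] at F1
    rw [h2] at G2
    have : p = q⁻¹ := FreeGroup.toWord_injective (by rw [← F1, ← G2])
    rw [this] at hx_eq
    simp at hx_eq
    exact hx1 hx_eq
  · -- u = y⁻¹, w = y⁻¹ : configuration on (x, y)
    rw [h1, inv_inv] at F1
    rw [h2] at G2
    have hsuf : y.toWord.drop (m - n2) = q.toWord := by
      have := suffix_of_take y q⁻¹ hylen G2
      rwa [inv_inv] at this
    exact hard_combo hx1 hyx hmin hx_eq hWx hpn hq2 rfl hmn F1 hsuf

/-- N2 with middle letter x at a minimal generating pair -/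
theorem N2_min_x {x y : F2} (hgen : Gen (x, y))
    (hmin : ∀ r, Reach (x, y) r → ‖x‖ + ‖y‖ ≤ ‖r.1‖ + ‖r.2‖) :
    ∀ u ∈ SS x y, ∀ w ∈ SS x y, x ≠ u⁻¹ → w ≠ x⁻¹ →
      kap u x + kap x w < ‖x‖ := by
  intro u hu w hw huc hwc
  obtain ⟨hx1, hy1, hyx, hyxi⟩ := nondeg hgen
  have hxS : x ∈ SS x y := Or.inl rfl
  by_contra hcon
  push_neg at hcon
  have N1 := N1_SS hx1 hy1 hmin
  have k1 := (N1 u hu x hxS huc).2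
  have k1' := (N1 u hu x hxS huc).1
  have k2 := (N1 x hxS w hw hwc).1
  have husplit : u = x ∨ u = x⁻¹ ∨ u = y ∨ u = y⁻¹ := by simpa [SS] using hu
  have hwsplit : w = x ∨ w = x⁻¹ ∨ w = y ∨ w = y⁻¹ := by simpa [SS] using hw
  rcases husplit with rfl | rfl | hu2 | hu2
  · have hs := kap_self hx1
    omega
  · exact huc (by simp)
  all_goals {
    rcases hwsplit with rfl | rfl | hw2 | hw2
    · have hs := kap_self hx1
      omega
    · exact hwc rfl
    · first
      | exact N2_core hx1 hyx hyxi hmin (Or.inl hu2) (Or.inl hw2) hcon k1 k1' k2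
      | exact N2_core hx1 hyx hyxi hmin (Or.inr hu2) (Or.inl hw2) hcon k1 k1' k2
    · first
      | exact N2_core hx1 hyx hyxi hmin (Or.inl hu2) (Or.inr hw2) hcon k1 k1' k2
      | exact N2_core hx1 hyx hyxi hmin (Or.inr hu2) (Or.inr hw2) hcon k1 k1' k2
  }

end Part7
section Part8

local notation "‖" g "‖" => FreeGroup.norm g

theorem SS_comm (x y : F2) : SS x y = SS y x := by
  ext z
  simp only [SS, Set.mem_insert_iff, Set.mem_singleton_iff]
  tauto

/-- N2 for all middle letters at a minimal generating pair -/
theorem N2_SS {x y : F2} (hgen : Gen (x, y))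
    (hmin : ∀ r, Reach (x, y) r → ‖x‖ + ‖y‖ ≤ ‖r.1‖ + ‖r.2‖) :
    ∀ u ∈ SS x y, ∀ v ∈ SS x y, ∀ w ∈ SS x y, v ≠ u⁻¹ → w ≠ v⁻¹ →
      kap u v + kap v w < ‖v‖ := by
  have hgen' : Gen (y, x) := by
    unfold Gen at *
    simp only at *
    rwa [Set.pair_comm]
  have hmin' : ∀ r, Reach (y, x) r → ‖y‖ + ‖x‖ ≤ ‖r.1‖ + ‖r.2‖ := by
    intro r hr
    have := hmin r ((Relation.ReflTransGen.single (Mv.swap x y)).trans hr)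
    omega
  have midx := N2_min_x hgen hmin
  have midy := N2_min_x hgen' hmin'
  -- reduce the inverse-middle case
  have reduce_inv : ∀ (x' y' : F2),
      (∀ u ∈ SS x' y', ∀ w ∈ SS x' y', x' ≠ u⁻¹ → w ≠ x'⁻¹ → kap u x' + kap x' w < ‖x'‖) →
      (∀ u ∈ SS x' y', ∀ w ∈ SS x' y', x'⁻¹ ≠ u⁻¹ → w ≠ x'⁻¹⁻¹ →
        kap u x'⁻¹ + kap x'⁻¹ w < ‖x'⁻¹‖) := by
    intro x' y' base u hu w hw hu' hw'
    have h1 : kap u x'⁻¹ = kap x' u⁻¹ := by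
      rw [kap_inv_inv u x'⁻¹, inv_inv]
    have h2 : kap x'⁻¹ w = kap w⁻¹ x' := by
      rw [kap_inv_inv x'⁻¹ w, inv_inv]
    rw [h1, h2, FreeGroup.norm_inv_eq]
    have hb := base w⁻¹ (SS_inv hw) u⁻¹ (SS_inv hu)
      (fun h => hw' (by rw [inv_inv] at h ⊢; exact h.symm))
      (fun h => hu' h.symm)
    omega
  intro u hu v hv w hw huc hwc
  have hvsplit : v = x ∨ v = x⁻¹ ∨ v = y ∨ v = y⁻¹ := by simpa [SS] using hv
  rcases hvsplit with rfl | rfl | rfl | rfl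
  · exact midx u hu w hw huc hwc
  · exact reduce_inv x y midx u hu w hw huc hwc
  · rw [SS_comm] at hu hw
    exact midy u hu w hw huc hwc
  · rw [SS_comm] at hu hw
    exact reduce_inv y x midy u hu w hw huc hwc

theorem kom_swap (u v : F2) : Kom (u, v) = (Kom (v, u))⁻¹ := by
  unfold Kom
  group

theorem ecl_four (a b u v : F2) (hu : u = a ∨ u = a⁻¹) (hv : v = b ∨ v = b⁻¹) :
    Ecl (Kom (a, b)) (Kom (u, v)) := by
  rcases hu with rfl | rfl <;> rcases hv with rfl | rfl
  · exact Ecl.refl _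
  · right
    refine isConj_iff.mpr ⟨b⁻¹, ?_⟩
    unfold Kom
    group
  · right
    refine isConj_iff.mpr ⟨a⁻¹, ?_⟩
    unfold Kom
    group
  · left
    refine isConj_iff.mpr ⟨(b * a)⁻¹, ?_⟩
    unfold Kom
    group

theorem key_letters {x y : F2}
    (ha : (FreeGroup.of 0 : F2) ∈ SS x y) (hb : (FreeGroup.of 1 : F2) ∈ SS x y) :
    Ecl (Kom (FreeGroup.of 0, FreeGroup.of 1)) (Kom (x, y)) := by
  set a : F2 := FreeGroup.of 0 with hadef
  set b : F2 := FreeGroup.of 1 with hbdef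
  have tw : ∀ (i : Fin 2) (c : Bool), (FreeGroup.mk [(i, c)]).toWord = [(i, c)] :=
    fun i c => toWord_mk_of_rd (by simp [Rd])
  have hne : ∀ (i j : Fin 2) (c d : Bool), i ≠ j →
      FreeGroup.mk [(i, c)] ≠ FreeGroup.mk [(j, d)] := by
    intro i j c d hij h
    have := congrArg FreeGroup.toWord h
    rw [tw, tw] at this
    simp at this
    exact hij this.1
  have hainv : a⁻¹ = FreeGroup.mk [((0 : Fin 2), false)] := rfl
  have hbinv : b⁻¹ = FreeGroup.mk [((1 : Fin 2), false)] := rfl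
  have hab : a ≠ b := hne 0 1 true true (by decide)
  have hab2 : a ≠ b⁻¹ := by rw [hbinv]; exact hne 0 1 true false (by decide)
  have hab3 : a⁻¹ ≠ b := by rw [hainv]; exact hne 0 1 false true (by decide)
  have hab4 : a⁻¹ ≠ b⁻¹ := by rw [hainv, hbinv]; exact hne 0 1 false false (by decide)
  have ha' : a = x ∨ a = x⁻¹ ∨ a = y ∨ a = y⁻¹ := by simpa [SS] using ha
  have hb' : b = x ∨ b = x⁻¹ ∨ b = y ∨ b = y⁻¹ := by simpa [SS] using hb
  have inv_of : ∀ (z w : F2), z = w⁻¹ → w = z⁻¹ := by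
    intro z w h
    rw [h, inv_inv]
  -- case bash
  rcases ha' with h1 | h1 | h1 | h1 <;> rcases hb' with h2 | h2 | h2 | h2
  · exact absurd (h1.trans h2.symm) hab
  · exact absurd (by rw [h1, ← h2] : a⁻¹ = b) hab3
  · exact ecl_four a b x y (Or.inl h1.symm) (Or.inl h2.symm)
  · exact ecl_four a b x y (Or.inl h1.symm) (Or.inr (inv_of b y h2))
  · exact absurd ((inv_of a x h1).symm.trans h2.symm) hab3
  · exact absurd (h1.trans h2.symm) hab
  · exact ecl_four a b x y (Or.inr (inv_of a x h1)) (Or.inl h2.symm)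
  · exact ecl_four a b x y (Or.inr (inv_of a x h1)) (Or.inr (inv_of b y h2))
  · rw [kom_swap x y]
    exact Ecl.inv_right (ecl_four a b y x (Or.inl h1.symm) (Or.inl h2.symm))
  · rw [kom_swap x y]
    exact Ecl.inv_right (ecl_four a b y x (Or.inl h1.symm) (Or.inr (inv_of b x h2)))
  · exact absurd (h1.trans h2.symm) hab
  · exact absurd (by rw [h1, ← h2] : a⁻¹ = b) hab3
  · rw [kom_swap x y]
    exact Ecl.inv_right (ecl_four a b y x (Or.inr (inv_of a y h1)) (Or.inl h2.symm))
  · rw [kom_swap x y]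
    exact Ecl.inv_right (ecl_four a b y x (Or.inr (inv_of a y h1)) (Or.inr (inv_of b x h2)))
  · exact absurd ((inv_of a y h1).symm.trans h2.symm) hab3
  · exact absurd (h1.trans h2.symm) hab

end Part8
section Final

local notation "‖" g "‖" => FreeGroup.norm g

theorem closure_ab : Subgroup.closure ({FreeGroup.of 0, FreeGroup.of 1} : Set F2) = ⊤ := by
  have hr : (Set.range (FreeGroup.of : Fin 2 → F2))
      = {FreeGroup.of 0, FreeGroup.of 1} := by
    ext g
    constructor
    · rintro ⟨i, rfl⟩
      fin_cases i <;> simp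
    · rintro (rfl | hg)
      · exact ⟨0, rfl⟩
      · rw [Set.mem_singleton_iff] at hg
        subst hg
        exact ⟨1, rfl⟩
  rw [← hr]
  exact FreeGroup.closure_range_of (Fin 2)

theorem main_result (φ : F2 ≃* F2) :
    Ecl (Kom (FreeGroup.of 0, FreeGroup.of 1))
      (Kom (φ (FreeGroup.of 0), φ (FreeGroup.of 1))) := by
  set x0 : F2 := φ (FreeGroup.of 0) with hx0
  set y0 : F2 := φ (FreeGroup.of 1) with hy0
  have hgen0 : Gen (x0, y0) := by
    unfold Gen
    simp only
    have himg : ({x0, y0} : Set F2) = (⇑φ.toMonoidHom) '' {FreeGroup.of 0, FreeGroup.of 1} := by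
      rw [Set.image_pair]
      rfl
    rw [himg, ← MonoidHom.map_closure, closure_ab]
    exact Subgroup.map_top_of_surjective _ (MulEquiv.surjective _)
  -- pick a minimal pair in the orbit
  set Sset : Set ℕ := {n | ∃ p, Reach (x0, y0) p ∧ ‖p.1‖ + ‖p.2‖ = n} with hSset
  have hne : Sset.Nonempty := ⟨‖x0‖ + ‖y0‖, (x0, y0), Relation.ReflTransGen.refl, rfl⟩
  obtain ⟨p, hp, hpn⟩ := Nat.sInf_mem hne
  obtain ⟨x, y⟩ := p
  simp only at hpn
  have hmin : ∀ r, Reach (x, y) r → ‖x‖ + ‖y‖ ≤ ‖r.1‖ + ‖r.2‖ := by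
    intro r hr
    have hle : sInf Sset ≤ ‖r.1‖ + ‖r.2‖ := Nat.sInf_le ⟨r, hp.trans hr, rfl⟩
    omega
  have hgen : Gen (x, y) := reach_gen hp hgen0
  obtain ⟨hx1, hy1, hyx, hyxi⟩ := nondeg hgen
  have hS1 : ∀ u ∈ SS x y, u ≠ (1 : F2) := by
    intro u hu
    have : u = x ∨ u = x⁻¹ ∨ u = y ∨ u = y⁻¹ := by simpa [SS] using hu
    rcases this with rfl | rfl | rfl | rfl
    · exact hx1
    · simpa using hx1
    · exact hy1
    · simpa using hy1
  have N1 := N1_SS hx1 hy1 hmin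
  have N2 := N2_SS hgen hmin
  have hgenc : Subgroup.closure ({x, y} : Set F2) = ⊤ := hgen
  have ha : (FreeGroup.of 0 : F2) ∈ SS x y :=
    letter_mem_SS hgenc hS1 N1 N2 (FreeGroup.norm_of 0)
  have hb : (FreeGroup.of 1 : F2) ∈ SS x y :=
    letter_mem_SS hgenc hS1 N1 N2 (FreeGroup.norm_of 1)
  have E1 : Ecl (Kom (FreeGroup.of 0, FreeGroup.of 1)) (Kom (x, y)) := key_letters ha hb
  have E2 : Ecl (Kom (x0, y0)) (Kom (x, y)) := reach_kom hp
  exact E1.trans E2.symm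

end Final
end NielsenAux

/-- Any automorphism of the free group F₂ on a, b sends [a,b] = aba⁻¹b⁻¹ to a conjugate
of [a,b] or of [a,b]⁻¹. -/
theorem commutator_conj_invariant (α : FreeGroup (Fin 2) ≃* FreeGroup (Fin 2)) :
    let a := FreeGroup.of (0 : Fin 2)
    let b := FreeGroup.of (1 : Fin 2)
    let c := a * b * a⁻¹ * b⁻¹
    IsConj c (α c) ∨ IsConj c⁻¹ (α c) := by
  intro a b c
  have h := NielsenAux.main_result α
  have hc : NielsenAux.Kom (FreeGroup.of 0, FreeGroup.of 1) = c := rfl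
  have hαc : NielsenAux.Kom (α (FreeGroup.of 0), α (FreeGroup.of 1)) = α c := by
    unfold NielsenAux.Kom
    simp only [c, a, b, map_mul, map_inv]
  rw [hc, hαc] at h
  exact h
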